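/- The group H acts transitively on the set of single-centered BPS charge vectors: for every pair of vectors v, w ∈ B there exists g ∈ H with g·v = w. -/

import Mathlib

open Matrix NormedSpace

noncomputable section

/-- The generator `b₁` of (the image of) K* in SO(2,2). -/
def b1 : Matrix (Fin 4) (Fin 4) ℝ := !![0,-1,0,0; 1,0,0,0; 0,0,0,1; 0,0,-1,0]

/-- The generator `b₂`. -/
def b2 : Matrix (Fin 4) (Fin 4) ℝ := !![0,0,-1,0; 0,0,0,-1; -1,0,0,0; 0,-1,0,0]

/-- The generator `b₃`. -/
def b3 : Matrix (Fin 4) (Fin 4) ℝ := !![0,0,0,1; 0,0,-1,0; 0,-1,0,0; 1,0,0,0]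

/-- The generator `b₄`. -/
def b4 : Matrix (Fin 4) (Fin 4) ℝ := !![0,1,0,0; -1,0,0,0; 0,0,0,1; 0,0,-1,0]

/-- The quadratic form `Δ²(m,n,q,h) = m² + n² − q² − h²`. -/
def Δsq (v : Fin 4 → ℝ) : ℝ := v 0 ^ 2 + v 1 ^ 2 - v 2 ^ 2 - v 3 ^ 2

/-- The set of single-centered BPS charge vectors. -/
def B : Set (Fin 4 → ℝ) := {v | v ≠ 0 ∧ Δsq v = 0}

/-- The subgroup `H` of `GL(4,ℝ)` generated by the one-parameter groups `exp(t bᵢ)`,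
`i = 1,2,3,4`. -/
def H : Subgroup (GL (Fin 4) ℝ) :=
  Subgroup.closure {g : GL (Fin 4) ℝ | ∃ t : ℝ,
    (g : Matrix (Fin 4) (Fin 4) ℝ) = exp (t • b1) ∨
    (g : Matrix (Fin 4) (Fin 4) ℝ) = exp (t • b2) ∨
    (g : Matrix (Fin 4) (Fin 4) ℝ) = exp (t • b3) ∨
    (g : Matrix (Fin 4) (Fin 4) ℝ) = exp (t • b4)}

namespace HTransAux

lemma b1_sq : b1 * b1 = -1 := by
  ext i j
  fin_cases i <;> fin_cases j <;>
    simp [b1, Matrix.mul_apply, Fin.sum_univ_four, Matrix.one_apply, Matrix.vecHead,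
      Matrix.vecTail]

lemma b4_sq : b4 * b4 = -1 := by
  ext i j
  fin_cases i <;> fin_cases j <;>
    simp [b4, Matrix.mul_apply, Fin.sum_univ_four, Matrix.one_apply, Matrix.vecHead,
      Matrix.vecTail]

/-- exp of `t • A` when `A * A = -1`. -/
lemma exp_sq_neg_one {A : Matrix (Fin 4) (Fin 4) ℝ} (h : A * A = -1) (t : ℝ) :
    exp (t • A) = Real.cos t • 1 + Real.sin t • A := by
  letI : SeminormedRing (Matrix (Fin 4) (Fin 4) ℝ) := Matrix.linftyOpSemiNormedRing
  letI : NormedRing (Matrix (Fin 4) (Fin 4) ℝ) := Matrix.linftyOpNormedRing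
  letI : NormedAlgebra ℝ (Matrix (Fin 4) (Fin 4) ℝ) := Matrix.linftyOpNormedAlgebra
  set φ := Complex.liftAux A h with hφdef
  have hc : Continuous φ := φ.toLinearMap.continuous_of_finiteDimensional
  have h1 : φ ((t : ℂ) * Complex.I) = t • A := by
    rw [Complex.liftAux_apply]; simp
  have h2 := map_exp φ hc ((t : ℂ) * Complex.I)
  rw [h1] at h2
  refine h2.symm.trans ?_
  rw [← Complex.exp_eq_exp_ℂ, Complex.exp_mul_I,
    ← Complex.ofReal_cos, ← Complex.ofReal_sin, Complex.liftAux_apply]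
  simp [Algebra.algebraMap_eq_smul_one, Complex.cos_ofReal_re, Complex.sin_ofReal_re]

lemma exp_b1 (t : ℝ) : exp (t • b1) = Real.cos t • 1 + Real.sin t • b1 :=
  exp_sq_neg_one b1_sq t

lemma exp_b4 (t : ℝ) : exp (t • b4) = Real.cos t • 1 + Real.sin t • b4 :=
  exp_sq_neg_one b4_sq t

/-- Conjugating matrix diagonalizing `b2`. -/
def U : Matrix (Fin 4) (Fin 4) ℝ := !![1,0,1,0; 0,1,0,1; 1,0,-1,0; 0,1,0,-1]

lemma U_mul_U : U * U = (2:ℝ) • 1 := by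
  ext i j
  fin_cases i <;> fin_cases j <;>
    norm_num [U, Matrix.mul_apply, Fin.sum_univ_four, Matrix.one_apply, Matrix.vecHead,
      Matrix.vecTail, Fin.ext_iff, Matrix.cons_val_two, Matrix.cons_val_three]

/-- `U` as a unit. -/
def Uu : (Matrix (Fin 4) (Fin 4) ℝ)ˣ :=
  ⟨U, (2:ℝ)⁻¹ • U,
    by rw [mul_smul_comm, U_mul_U, smul_smul]; norm_num,
    by rw [smul_mul_assoc, U_mul_U, smul_smul]; norm_num⟩

lemma diag4 (x y z w : ℝ) :
    Matrix.diagonal ![x, y, z, w] = !![x,0,0,0; 0,y,0,0; 0,0,z,0; 0,0,0,w] := by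
  ext i j
  fin_cases i <;> fin_cases j <;>
    first
      | (simp [Matrix.diagonal_apply, Matrix.vecHead, Matrix.vecTail, Fin.ext_iff]; done)
      | (simp [Matrix.diagonal_apply, Matrix.vecHead, Matrix.vecTail, Fin.ext_iff]
         intro h
         exact absurd h (by decide))

set_option maxHeartbeats 1600000 in
lemma b2_conj (t : ℝ) :
    t • b2 = (Uu : Matrix (Fin 4) (Fin 4) ℝ) * Matrix.diagonal ![-t,-t,t,t] * (↑Uu⁻¹ : Matrix (Fin 4) (Fin 4) ℝ) := by
  have : (↑Uu⁻¹ : Matrix (Fin 4) (Fin 4) ℝ) = (2:ℝ)⁻¹ • U := rfl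
  rw [this]
  show t • b2 = U * Matrix.diagonal ![-t,-t,t,t] * ((2:ℝ)⁻¹ • U)
  rw [diag4]
  ext i j
  fin_cases i <;> fin_cases j <;>
    simp [U, b2, Matrix.mul_apply, Fin.sum_univ_four, Matrix.vecHead, Matrix.vecTail] <;> ring

set_option maxHeartbeats 1600000 in
lemma exp_b2 (t : ℝ) : exp (t • b2) = Real.cosh t • 1 + Real.sinh t • b2 := by
  rw [b2_conj, Matrix.exp_units_conj, Matrix.exp_diagonal]
  have hd : exp (![-t,-t,t,t] : Fin 4 → ℝ) =
      ![Real.exp (-t), Real.exp (-t), Real.exp t, Real.exp t] := by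
    rw [Pi.exp_def]
    funext i
    fin_cases i <;> simp [← Real.exp_eq_exp_ℝ]
  rw [hd, diag4]
  have hinv : (↑Uu⁻¹ : Matrix (Fin 4) (Fin 4) ℝ) = (2:ℝ)⁻¹ • U := rfl
  rw [hinv]
  show (U : Matrix (Fin 4) (Fin 4) ℝ) * _ * ((2:ℝ)⁻¹ • U) = _
  ext i j
  fin_cases i <;> fin_cases j <;>
    simp [U, b2, Matrix.mul_apply, Fin.sum_univ_four, Matrix.one_apply, Matrix.vecHead,
      Matrix.vecTail, Real.cosh_eq, Real.sinh_eq] <;> ring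

lemma commute_smul (A : Matrix (Fin 4) (Fin 4) ℝ) (t s : ℝ) :
    Commute (t • A) (s • A) := by
  unfold Commute SemiconjBy
  rw [smul_mul_smul_comm, smul_mul_smul_comm, mul_comm t s]

/-- `exp (t • A)` as an element of `GL(4, ℝ)`. -/
def gexp (A : Matrix (Fin 4) (Fin 4) ℝ) (t : ℝ) : GL (Fin 4) ℝ :=
  ⟨exp (t • A), exp ((-t) • A),
    by rw [← Matrix.exp_add_of_commute _ _ (commute_smul A t (-t)), ← add_smul,
        add_neg_cancel, zero_smul, exp_zero],
    by rw [← Matrix.exp_add_of_commute _ _ (commute_smul A (-t) t), ← add_smul,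
        neg_add_cancel, zero_smul, exp_zero]⟩

lemma gexp_coe (A : Matrix (Fin 4) (Fin 4) ℝ) (t : ℝ) :
    ((gexp A t : GL (Fin 4) ℝ) : Matrix (Fin 4) (Fin 4) ℝ) = exp (t • A) := rfl

lemma gexp_b1_mem (t : ℝ) : gexp b1 t ∈ H :=
  Subgroup.subset_closure ⟨t, Or.inl rfl⟩

lemma gexp_b2_mem (t : ℝ) : gexp b2 t ∈ H :=
  Subgroup.subset_closure ⟨t, Or.inr (Or.inl rfl)⟩

lemma gexp_b4_mem (t : ℝ) : gexp b4 t ∈ H :=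
  Subgroup.subset_closure ⟨t, Or.inr (Or.inr (Or.inr rfl))⟩

lemma mulVec_cs (c s : ℝ) (A : Matrix (Fin 4) (Fin 4) ℝ) (v : Fin 4 → ℝ) :
    (c • (1 : Matrix (Fin 4) (Fin 4) ℝ) + s • A).mulVec v = c • v + s • A.mulVec v := by
  rw [Matrix.add_mulVec, Matrix.smul_mulVec, Matrix.smul_mulVec, Matrix.one_mulVec]

lemma b1_mulVec (v : Fin 4 → ℝ) : b1.mulVec v = ![-v 1, v 0, v 3, -v 2] := by
  funext i
  fin_cases i <;> simp [b1, Matrix.mulVec, dotProduct, Fin.sum_univ_four]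

lemma b2_mulVec (v : Fin 4 → ℝ) : b2.mulVec v = ![-v 2, -v 3, -v 0, -v 1] := by
  funext i
  fin_cases i <;> simp [b2, Matrix.mulVec, dotProduct, Fin.sum_univ_four]

lemma b4_mulVec (v : Fin 4 → ℝ) : b4.mulVec v = ![v 1, -v 0, v 3, -v 2] := by
  funext i
  fin_cases i <;> simp [b4, Matrix.mulVec, dotProduct, Fin.sum_univ_four]

lemma exists_angle {x y r : ℝ} (hr : 0 < r) (h : x ^ 2 + y ^ 2 = r ^ 2) :
    ∃ a : ℝ, x = r * Real.cos a ∧ y = r * Real.sin a := by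
  have habs : ‖(⟨x, y⟩ : ℂ)‖ = r := by
    rw [Complex.norm_def, Complex.normSq_mk]
    have : x * x + y * y = r ^ 2 := by nlinarith
    rw [this, Real.sqrt_sq hr.le]
  have hz0 : (⟨x, y⟩ : ℂ) ≠ 0 := by
    intro h0
    rw [h0] at habs
    simp at habs
    linarith
  refine ⟨Complex.arg ⟨x, y⟩, ?_, ?_⟩
  · rw [Complex.cos_arg hz0, habs]
    field_simp
  · rw [Complex.sin_arg, habs]
    field_simp

lemma reduce {v : Fin 4 → ℝ} (hv : v ∈ B) :
    ∃ g ∈ H, (g : Matrix (Fin 4) (Fin 4) ℝ).mulVec v = ![1, 0, 1, 0] := by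
  obtain ⟨hv0, hvq⟩ := hv
  have hq : v 2 ^ 2 + v 3 ^ 2 = v 0 ^ 2 + v 1 ^ 2 := by
    unfold Δsq at hvq; linarith
  have hpos : 0 < v 0 ^ 2 + v 1 ^ 2 := by
    rcases lt_or_eq_of_le (by positivity : (0:ℝ) ≤ v 0 ^ 2 + v 1 ^ 2) with h | h
    · exact h
    · exfalso
      apply hv0
      have h0 : v 0 = 0 ∧ v 1 = 0 := by constructor <;> nlinarith
      have h2 : v 2 = 0 ∧ v 3 = 0 := by constructor <;> nlinarith
      funext i
      fin_cases i <;> simp [h0.1, h0.2, h2.1, h2.2]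
  obtain ⟨r, hr0, hr2⟩ : ∃ r : ℝ, 0 < r ∧ v 0 ^ 2 + v 1 ^ 2 = r ^ 2 :=
    ⟨Real.sqrt (v 0 ^ 2 + v 1 ^ 2), Real.sqrt_pos.2 hpos, (Real.sq_sqrt hpos.le).symm⟩
  obtain ⟨a, ha0, ha1⟩ := exists_angle hr0 hr2
  obtain ⟨b, hb2, hb3⟩ := exists_angle hr0 (hq.trans hr2)
  obtain ⟨t, u, hut, htu⟩ : ∃ t u : ℝ, u - t = a ∧ t + u = b :=
    ⟨(b - a) / 2, (a + b) / 2, by ring, by ring⟩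
  rw [← hut] at ha0 ha1
  rw [← htu] at hb2 hb3
  set l := Real.log r with hldef
  refine ⟨gexp b2 l * (gexp b4 u * gexp b1 t),
    mul_mem (gexp_b2_mem l) (mul_mem (gexp_b4_mem u) (gexp_b1_mem t)), ?_⟩
  have hcoe : ((gexp b2 l * (gexp b4 u * gexp b1 t) : GL (Fin 4) ℝ) :
      Matrix (Fin 4) (Fin 4) ℝ) =
      exp (l • b2) * (exp (u • b4) * exp (t • b1)) := rfl
  rw [hcoe, ← Matrix.mulVec_mulVec, ← Matrix.mulVec_mulVec]
  -- step 1 : rotation by b1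
  have e1 : (exp (t • b1)).mulVec v =
      ![Real.cos t * v 0 - Real.sin t * v 1, Real.sin t * v 0 + Real.cos t * v 1,
        Real.cos t * v 2 + Real.sin t * v 3, Real.cos t * v 3 - Real.sin t * v 2] := by
    rw [exp_b1, mulVec_cs, b1_mulVec]
    funext i
    fin_cases i <;> simp <;> ring
  rw [e1]
  -- step 2 : rotation by b4
  have e2 : (exp (u • b4)).mulVec
      ![Real.cos t * v 0 - Real.sin t * v 1, Real.sin t * v 0 + Real.cos t * v 1,
        Real.cos t * v 2 + Real.sin t * v 3, Real.cos t * v 3 - Real.sin t * v 2] =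
      ![r, 0, r, 0] := by
    rw [exp_b4, mulVec_cs, b4_mulVec]
    funext i
    fin_cases i
    · simp [ha0, ha1, Real.cos_sub, Real.sin_sub]
      linear_combination (r * (Real.cos u ^ 2 + Real.sin u ^ 2)) * Real.sin_sq_add_cos_sq t +
        r * Real.sin_sq_add_cos_sq u
    · simp [ha0, ha1, Real.cos_sub, Real.sin_sub]
      ring
    · simp [hb2, hb3, Real.cos_add, Real.sin_add]
      linear_combination (r * (Real.cos u ^ 2 + Real.sin u ^ 2)) * Real.sin_sq_add_cos_sq t +
        r * Real.sin_sq_add_cos_sq u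
    · simp [hb2, hb3, Real.cos_add, Real.sin_add]
      ring
  rw [e2]
  -- step 3 : boost by b2
  rw [exp_b2, mulVec_cs, b2_mulVec]
  have hexp : r * (Real.cosh l - Real.sinh l) = 1 := by
    rw [Real.cosh_sub_sinh, hldef, ← Real.log_inv, Real.exp_log (by positivity)]
    exact mul_inv_cancel₀ hr0.ne'
  funext i
  fin_cases i <;> simp <;> linear_combination hexp

end HTransAux

open HTransAux in
/-- `H` acts transitively on the set `B` of single-centered BPS charge vectors. -/
theorem H_transitive_on_B :
    ∀ v ∈ B, ∀ w ∈ B, ∃ g ∈ H, (g : Matrix (Fin 4) (Fin 4) ℝ).mulVec v = w := by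
  intro v hv w hw
  obtain ⟨gv, hgv, hgvv⟩ := reduce hv
  obtain ⟨gw, hgw, hgww⟩ := reduce hw
  refine ⟨gw⁻¹ * gv, mul_mem (inv_mem hgw) hgv, ?_⟩
  have : ((gw⁻¹ * gv : GL (Fin 4) ℝ) : Matrix (Fin 4) (Fin 4) ℝ) =
      (↑gw⁻¹ : Matrix (Fin 4) (Fin 4) ℝ) * (gv : Matrix (Fin 4) (Fin 4) ℝ) := rfl
  rw [this, ← Matrix.mulVec_mulVec, hgvv, ← hgww, Matrix.mulVec_mulVec]
  have h1 : (↑gw⁻¹ : Matrix (Fin 4) (Fin 4) ℝ) * (gw : Matrix (Fin 4) (Fin 4) ℝ) = 1 := by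
    rw [← Units.val_mul, inv_mul_cancel, Units.val_one]
  rw [h1, Matrix.one_mulVec]
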